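/- Let X be a compact metric space and P a positive bounded operator on C⁰(X) of operator norm at most 1. For every complex Borel measure λ on X, the total variation measures satisfy |P*λ| ≤ P*|λ|. In particular, if P*λ = λ then P*|λ| = |λ|. -/

import Mathlib

set_option maxHeartbeats 2000000 in
/-- Riesz-representation formulation: complex Borel measures on a compact metric
space `X` are represented by continuous linear functionals `λ : C(X,ℂ) → ℂ`, the
adjoint action `P*λ` is `λ ∘ P`, and the total variation `|λ|` is characterized
(on nonnegative continuous `g`) by `∫ g d|λ| = sup_{‖h‖ ≤ 1} |λ(g·h)|`.
If `P` is a positive operator on `C⁰(X)` of norm at most `1`, then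
`|P*λ| ≤ P*|λ|`; in particular, if `P*λ = λ` then `P*|λ| = |λ|`. -/
theorem totalVariation_adjoint_le
    {X : Type*} [MetricSpace X] [CompactSpace X]
    (P : C(X, ℂ) →L[ℂ] C(X, ℂ))
    (hPpos : ∀ g : C(X, ℂ), (∀ x, 0 ≤ (g x).re ∧ (g x).im = 0) →
      ∀ x, 0 ≤ (P g x).re ∧ (P g x).im = 0)
    (hPnorm : ‖P‖ ≤ 1)
    (lam : C(X, ℂ) →L[ℂ] ℂ)
    (V : (C(X, ℂ) →L[ℂ] ℂ) → C(X, ℂ) → ℝ)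
    (hV : ∀ (μ : C(X, ℂ) →L[ℂ] ℂ) (g : C(X, ℂ)), (∀ x, 0 ≤ (g x).re ∧ (g x).im = 0) →
      IsLUB {r : ℝ | ∃ h : C(X, ℂ), ‖h‖ ≤ 1 ∧ r = ‖μ (g * h)‖} (V μ g)) :
    (∀ g : C(X, ℂ), (∀ x, 0 ≤ (g x).re ∧ (g x).im = 0) →
      V (lam.comp P) g ≤ V lam (P g)) ∧
    (lam.comp P = lam → ∀ g : C(X, ℂ), (∀ x, 0 ≤ (g x).re ∧ (g x).im = 0) →
      V lam (P g) = V lam g) := by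
  classical
  -- basic complex facts
  have re_le_norm : ∀ z : ℂ, z.re ≤ ‖z‖ := fun z => by
    exact Complex.re_le_norm z
  have hofR : ∀ z : ℂ, z.im = 0 → z = ((z.re : ℝ) : ℂ) := fun z hz => by
    apply Complex.ext <;> simp [hz]
  have hnormRe : ∀ z : ℂ, 0 ≤ z.re → z.im = 0 → ‖z‖ = z.re := fun z h1 h2 => by
    conv_lhs => rw [hofR z h2]
    rw [Complex.norm_real, Real.norm_eq_abs]; exact abs_of_nonneg h1
  have phase : ∀ a : ℂ, ∃ u : ℂ, ‖u‖ = 1 ∧ u * a = ((‖a‖ : ℝ) : ℂ) := by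
    intro a
    rcases eq_or_ne a 0 with rfl | ha
    · exact ⟨1, norm_one, by simp⟩
    · refine ⟨(‖a‖ : ℂ) / a, ?_, div_mul_cancel₀ _ ha⟩
      rw [norm_div, Complex.norm_real, Real.norm_eq_abs, abs_of_nonneg (norm_nonneg a),
        div_self (norm_ne_zero_iff.mpr ha)]
  -- the core approximation lemma
  have core : ∀ G : C(X, ℂ), (∀ x, 0 ≤ (G x).re ∧ (G x).im = 0) →
      ∀ k : C(X, ℂ), (∀ x, ‖k x‖ ≤ (G x).re) → ‖lam k‖ ≤ V lam G := by
    intro G hG k hk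
    have hGx : ∀ x, G x = (((G x).re : ℝ) : ℂ) := fun x => hofR _ (hG x).2
    refine le_of_forall_pos_le_add ?_
    intro δ hδ
    have hlam1 : (0:ℝ) < ‖lam‖ + 1 := by positivity
    set ε : ℝ := (2 * δ / (‖lam‖ + 1))^2 with hεdef
    have hεpos : 0 < ε := by positivity
    have hsqrt : Real.sqrt ε = 2 * δ / (‖lam‖ + 1) := by
      rw [hεdef, Real.sqrt_sq (by positivity)]
    have hden : ∀ x, G x * G x + (ε:ℂ) ≠ 0 := by
      intro x
      rw [hGx x]
      have hcast : (((G x).re : ℝ) : ℂ) * ((G x).re : ℝ) + (ε:ℂ)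
          = (((G x).re * (G x).re + ε : ℝ) : ℂ) := by push_cast; ring
      rw [hcast]
      exact Complex.ofReal_ne_zero.mpr
        (by nlinarith [(hG x).1, mul_self_nonneg (G x).re])
    set hf : C(X, ℂ) := ⟨fun x => k x * G x / (G x * G x + (ε:ℂ)),
      ((map_continuous k).mul (map_continuous G)).div
        (((map_continuous G).mul (map_continuous G)).add continuous_const) hden⟩ with hhf
    have key : ∀ x, ‖hf x‖ ≤ 1 ∧ ‖k x - G x * hf x‖ ≤ Real.sqrt ε / 2 := by
      intro x
      have ht : 0 ≤ (G x).re := (hG x).1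
      set t := (G x).re with htdef
      have hte : (0:ℝ) < t*t + ε := by nlinarith [mul_self_nonneg t]
      have hne : ((t*t+ε : ℝ) : ℂ) ≠ 0 := Complex.ofReal_ne_zero.mpr hte.ne'
      have h1 : hf x = k x * (((t:ℝ) : ℂ) / ((t*t+ε : ℝ):ℂ)) := by
        simp only [hhf, ContinuousMap.coe_mk]
        rw [hGx x]
        push_cast
        ring
      constructor
      · rw [h1, norm_mul, norm_div, Complex.norm_real, Complex.norm_real,
          Real.norm_eq_abs, Real.norm_eq_abs, abs_of_nonneg ht, abs_of_nonneg hte.le]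
        have hb : ‖k x‖ * (t / (t*t+ε)) = (‖k x‖ * t) / (t*t+ε) := by ring
        rw [hb, div_le_one hte]
        nlinarith [hk x, norm_nonneg (k x)]
      · have hD : (((t:ℝ)) : ℂ) * ((t:ℝ) : ℂ) + ((ε:ℝ):ℂ) ≠ 0 := by
          rw [show (((t:ℝ)) : ℂ) * ((t:ℝ) : ℂ) + ((ε:ℝ):ℂ) = ((t*t+ε : ℝ) : ℂ) from by
            push_cast; ring]
          exact hne
        have h2 : k x - G x * hf x = k x * (((ε/(t*t+ε) : ℝ)):ℂ) := by
          simp only [hhf, ContinuousMap.coe_mk]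
          rw [hGx x]
          push_cast
          rw [← htdef]
          have hD2 : ((t:ℝ):ℂ) ^ 2 + ((ε:ℝ):ℂ) ≠ 0 := by rw [sq]; exact hD
          field_simp
          ring
        rw [h2, norm_mul, Complex.norm_real, Real.norm_eq_abs,
          abs_of_nonneg (by positivity)]
        have h3 : ‖k x‖ * (ε/(t*t+ε)) ≤ t * (ε/(t*t+ε)) :=
          mul_le_mul_of_nonneg_right (hk x) (by positivity)
        have h4 : t * (ε/(t*t+ε)) ≤ Real.sqrt ε / 2 := by
          rw [mul_div_assoc', div_le_div_iff₀ hte two_pos]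
          nlinarith [Real.sq_sqrt hεpos.le, Real.sqrt_nonneg ε,
            mul_nonneg (Real.sqrt_nonneg ε) (sq_nonneg (t - Real.sqrt ε))]
        linarith
    have hmem : ‖lam (G * hf)‖ ≤ V lam G :=
      (hV lam G hG).1 ⟨hf, (ContinuousMap.norm_le _ zero_le_one).mpr
        (fun x => (key x).1), rfl⟩
    have hdiff : ‖k - G * hf‖ ≤ Real.sqrt ε / 2 := by
      refine (ContinuousMap.norm_le _ (by positivity)).mpr (fun x => ?_)
      simpa using (key x).2
    have hsplit : lam k = lam (G * hf) + lam (k - G * hf) := by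
      rw [← map_add]; congr 1; ring
    have hstep : ‖lam (k - G * hf)‖ ≤ ‖lam‖ * (Real.sqrt ε / 2) :=
      (lam.le_opNorm _).trans (mul_le_mul_of_nonneg_left hdiff (norm_nonneg lam))
    have hfin : ‖lam‖ * (Real.sqrt ε / 2) ≤ δ := by
      rw [hsqrt]
      have h5 : ‖lam‖ * (2 * δ / (‖lam‖ + 1) / 2) = ‖lam‖ * δ / (‖lam‖+1) := by ring
      rw [h5, div_le_iff₀ hlam1]
      nlinarith [norm_nonneg lam]
    calc ‖lam k‖ ≤ ‖lam (G*hf)‖ + ‖lam (k - G*hf)‖ := by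
          rw [hsplit]; exact norm_add_le _ _
      _ ≤ V lam G + δ := by linarith
  -- P maps real functions to real functions
  have Preal : ∀ f : C(X,ℂ), (∀ x, (f x).im = 0) → ∀ x, (P f x).im = 0 := by
    intro f hf x
    have hc : (0:ℝ) ≤ ‖f‖ := norm_nonneg f
    have h1 : ∀ y, 0 ≤ ((f + ((‖f‖:ℝ):ℂ) • 1) y).re ∧ ((f + ((‖f‖:ℝ):ℂ) • 1) y).im = 0 := by
      intro y
      have habs : |(f y).re| ≤ ‖f‖ := by
        calc |(f y).re| ≤ ‖f y‖ := by
              exact Complex.abs_re_le_norm (f y)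
          _ ≤ ‖f‖ := f.norm_coe_le_norm y
      constructor
      · simp only [ContinuousMap.add_apply, ContinuousMap.smul_apply,
          ContinuousMap.one_apply, smul_eq_mul, mul_one, Complex.add_re, Complex.ofReal_re]
        linarith [(abs_le.mp habs).1]
      · simp [ContinuousMap.add_apply, ContinuousMap.smul_apply,
          ContinuousMap.one_apply, Complex.add_im, hf y]
    have h2 := (hPpos _ h1 x).2
    have h3 := (hPpos (((‖f‖:ℝ):ℂ) • 1) (fun y => by
      simp [ContinuousMap.smul_apply, ContinuousMap.one_apply, hc]) x).2
    have h4 := congrArg (fun q => (q x).im) (map_add P f (((‖f‖:ℝ):ℂ) • 1))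
    simp only [ContinuousMap.add_apply, Complex.add_im] at h4
    rw [h2] at h4
    linarith [h4, h3]
  -- P is monotone on real functions
  have Pmono : ∀ f g : C(X,ℂ), (∀ x, (f x).im = 0) → (∀ x, (g x).im = 0) →
      (∀ x, (f x).re ≤ (g x).re) → ∀ x, (P f x).re ≤ (P g x).re := by
    intro f g hf hg hfg x
    have h := hPpos (g - f) (fun y => by
      constructor
      · simp only [ContinuousMap.sub_apply, Complex.sub_re]
        linarith [hfg y]
      · simp [ContinuousMap.sub_apply, Complex.sub_im, hf y, hg y]) x
    rw [map_sub] at h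
    have := h.1
    simp only [ContinuousMap.sub_apply, Complex.sub_re] at this
    linarith
  -- pointwise bound: ‖P(g·h)(x)‖ ≤ (P g)(x).re
  have Pbound : ∀ g : C(X,ℂ), (∀ x, 0 ≤ (g x).re ∧ (g x).im = 0) →
      ∀ h : C(X,ℂ), ‖h‖ ≤ 1 → ∀ x, ‖P (g * h) x‖ ≤ (P g x).re := by
    intro g hg h hh x
    obtain ⟨u, hu, huc⟩ := phase (P (g * h) x)
    set h' : C(X,ℂ) := u • h with hh'def
    have hh'n : ‖h'‖ ≤ 1 := by rw [hh'def, norm_smul, hu, one_mul]; exact hh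
    set f1 : C(X,ℂ) := ⟨fun y => (((h' y).re : ℝ) : ℂ),
      Complex.continuous_ofReal.comp (Complex.continuous_re.comp (map_continuous h'))⟩ with hf1
    set f2 : C(X,ℂ) := ⟨fun y => (((h' y).im : ℝ) : ℂ),
      Complex.continuous_ofReal.comp (Complex.continuous_im.comp (map_continuous h'))⟩ with hf2
    have hdec : g * h' = g * f1 + Complex.I • (g * f2) := by
      ext y
      simp only [ContinuousMap.add_apply, ContinuousMap.mul_apply, ContinuousMap.smul_apply,
        hf1, hf2, ContinuousMap.coe_mk, smul_eq_mul]
      conv_lhs => rw [← Complex.re_add_im (h' y)]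
      ring
    have him1 : ∀ y, ((g * f1) y).im = 0 := fun y => by
      simp [ContinuousMap.mul_apply, hf1, Complex.mul_im, (hg y).2]
    have him2 : ∀ y, ((g * f2) y).im = 0 := fun y => by
      simp [ContinuousMap.mul_apply, hf2, Complex.mul_im, (hg y).2]
    have hr2 := Preal (g*f2) him2
    have hgh' : P (g * h') x = ((‖P (g*h) x‖ : ℝ) : ℂ) := by
      have hcomm : g * h' = u • (g * h) := by
        ext y
        simp only [ContinuousMap.mul_apply, ContinuousMap.smul_apply, hh'def, smul_eq_mul]
        ring
      rw [hcomm, map_smul]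
      simp only [ContinuousMap.smul_apply, smul_eq_mul]
      exact huc
    have hre : (P (g * h') x).re = (P (g*f1) x).re := by
      rw [hdec, map_add, map_smul]
      simp [ContinuousMap.add_apply, ContinuousMap.smul_apply, Complex.add_re,
        smul_eq_mul, Complex.mul_re, Complex.I_re, Complex.I_im, hr2 x]
    have hkey : ‖P (g*h) x‖ = (P (g*f1) x).re := by
      rw [← hre, hgh', Complex.ofReal_re]
    rw [hkey]
    apply Pmono (g*f1) g him1 (fun y => (hg y).2) ?_ x
    intro y
    have h1 : ((g*f1) y).re = (g y).re * (h' y).re := by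
      simp [ContinuousMap.mul_apply, hf1, Complex.mul_re, (hg y).2]
    rw [h1]
    have h2 : (h' y).re ≤ 1 := (re_le_norm _).trans ((h'.norm_coe_le_norm y).trans hh'n)
    nlinarith [(hg y).1]
  -- pointwise bound for products with nonneg g
  have bnd : ∀ g : C(X,ℂ), (∀ x, 0 ≤ (g x).re ∧ (g x).im = 0) →
      ∀ h : C(X,ℂ), ‖h‖ ≤ 1 → ∀ x, ‖(g*h) x‖ ≤ (g x).re := by
    intro g hg h hh x
    rw [ContinuousMap.mul_apply, norm_mul, hnormRe _ (hg x).1 (hg x).2]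
    have h2 : ‖h x‖ ≤ 1 := (h.norm_coe_le_norm x).trans hh
    nlinarith [(hg x).1, norm_nonneg (h x)]
  -- part 1
  have part1 : ∀ g : C(X,ℂ), (∀ x, 0 ≤ (g x).re ∧ (g x).im = 0) →
      V (lam.comp P) g ≤ V lam (P g) := by
    intro g hg
    apply (hV (lam.comp P) g hg).2
    rintro r ⟨h, hh, rfl⟩
    have : (lam.comp P) (g * h) = lam (P (g * h)) := rfl
    rw [this]
    exact core (P g) (hPpos g hg) (P (g*h)) (Pbound g hg h hh)
  -- monotonicity of V lam
  have mono : ∀ g1 g2 : C(X,ℂ), (∀ x, 0 ≤ (g1 x).re ∧ (g1 x).im = 0) →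
      (∀ x, 0 ≤ (g2 x).re ∧ (g2 x).im = 0) → (∀ x, (g1 x).re ≤ (g2 x).re) →
      V lam g1 ≤ V lam g2 := by
    intro g1 g2 h1 h2 h12
    apply (hV lam g1 h1).2
    rintro r ⟨h, hh, rfl⟩
    exact core g2 h2 (g1 * h) (fun x => (bnd g1 h1 h hh x).trans (h12 x))
  -- subadditivity
  have isPosAdd : ∀ g1 g2 : C(X,ℂ), (∀ x, 0 ≤ (g1 x).re ∧ (g1 x).im = 0) →
      (∀ x, 0 ≤ (g2 x).re ∧ (g2 x).im = 0) →
      ∀ x, 0 ≤ ((g1+g2) x).re ∧ ((g1+g2) x).im = 0 := by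
    intro g1 g2 h1 h2 x
    constructor
    · simp only [ContinuousMap.add_apply, Complex.add_re]
      linarith [(h1 x).1, (h2 x).1]
    · simp [ContinuousMap.add_apply, Complex.add_im, (h1 x).2, (h2 x).2]
  have subadd : ∀ g1 g2 : C(X,ℂ), (∀ x, 0 ≤ (g1 x).re ∧ (g1 x).im = 0) →
      (∀ x, 0 ≤ (g2 x).re ∧ (g2 x).im = 0) →
      V lam (g1 + g2) ≤ V lam g1 + V lam g2 := by
    intro g1 g2 h1 h2
    apply (hV lam (g1+g2) (isPosAdd g1 g2 h1 h2)).2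
    rintro r ⟨h, hh, rfl⟩
    have hsplit : (g1+g2)*h = g1*h + g2*h := by ring
    rw [hsplit, map_add]
    calc ‖lam (g1*h) + lam (g2*h)‖ ≤ ‖lam (g1*h)‖ + ‖lam (g2*h)‖ := norm_add_le _ _
      _ ≤ V lam g1 + V lam g2 :=
          add_le_add ((hV lam g1 h1).1 ⟨h, hh, rfl⟩) ((hV lam g2 h2).1 ⟨h, hh, rfl⟩)
  -- superadditivity
  have superadd : ∀ g1 g2 : C(X,ℂ), (∀ x, 0 ≤ (g1 x).re ∧ (g1 x).im = 0) →
      (∀ x, 0 ≤ (g2 x).re ∧ (g2 x).im = 0) →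
      V lam g1 + V lam g2 ≤ V lam (g1 + g2) := by
    intro g1 g2 h1 h2
    have hsum := isPosAdd g1 g2 h1 h2
    have key : ∀ h h' : C(X,ℂ), ‖h‖ ≤ 1 → ‖h'‖ ≤ 1 →
        ‖lam (g1*h)‖ + ‖lam (g2*h')‖ ≤ V lam (g1+g2) := by
      intro h h' hh hh'
      obtain ⟨u, hu, huc⟩ := phase (lam (g1*h))
      obtain ⟨v, hv, hvc⟩ := phase (lam (g2*h'))
      set k : C(X,ℂ) := u • (g1*h) + v • (g2*h') with hkdef
      have hlamk : lam k = ((‖lam (g1*h)‖ + ‖lam (g2*h')‖ : ℝ) : ℂ) := by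
        rw [hkdef, map_add, map_smul, map_smul, smul_eq_mul, smul_eq_mul, huc, hvc]
        push_cast
        ring
      have hnorm : ‖lam k‖ = ‖lam (g1*h)‖ + ‖lam (g2*h')‖ := by
        rw [hlamk, Complex.norm_real, Real.norm_eq_abs, abs_of_nonneg (by positivity)]
      rw [← hnorm]
      apply core (g1+g2) hsum
      intro x
      have e1 : ‖k x‖ ≤ ‖(g1*h) x‖ + ‖(g2*h') x‖ := by
        rw [hkdef]
        simp only [ContinuousMap.add_apply, ContinuousMap.smul_apply]
        refine (norm_add_le _ _).trans ?_
        rw [norm_smul, norm_smul, hu, hv, one_mul, one_mul]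
      have e2 : ((g1+g2) x).re = (g1 x).re + (g2 x).re := by
        simp [ContinuousMap.add_apply, Complex.add_re]
      rw [e2]
      linarith [bnd g1 h1 h hh x, bnd g2 h2 h' hh' x, e1]
    have step1 : ∀ h : C(X,ℂ), ‖h‖ ≤ 1 →
        ‖lam (g1*h)‖ ≤ V lam (g1+g2) - V lam g2 := by
      intro h hh
      have h2b : V lam g2 ≤ V lam (g1+g2) - ‖lam (g1*h)‖ := by
        apply (hV lam g2 h2).2
        rintro r ⟨h', hh', rfl⟩
        linarith [key h h' hh hh']
      linarith
    have h1b : V lam g1 ≤ V lam (g1+g2) - V lam g2 := by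
      apply (hV lam g1 h1).2
      rintro r ⟨h, hh, rfl⟩
      exact step1 h hh
    linarith
  refine ⟨part1, ?_⟩
  -- part 2
  intro hinv g hg
  have a1 : V lam g ≤ V lam (P g) := by
    have := part1 g hg; rwa [hinv] at this
  have hc : (0:ℝ) ≤ ‖g‖ := norm_nonneg g
  set C : C(X,ℂ) := ((‖g‖:ℝ):ℂ) • 1 with hCdef
  have hCapp : ∀ x, C x = ((‖g‖:ℝ):ℂ) := fun x => by
    simp [hCdef, ContinuousMap.smul_apply, ContinuousMap.one_apply]
  have hCpos : ∀ x, 0 ≤ (C x).re ∧ (C x).im = 0 := fun x => by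
    rw [hCapp x]; simp [hc]
  have hgle : ∀ x, (g x).re ≤ ‖g‖ := fun x =>
    (re_le_norm _).trans (g.norm_coe_le_norm x)
  have hCg : ∀ x, 0 ≤ ((C - g) x).re ∧ ((C - g) x).im = 0 := by
    intro x
    constructor
    · simp only [ContinuousMap.sub_apply, Complex.sub_re, hCapp x, Complex.ofReal_re]
      linarith [hgle x]
    · simp [ContinuousMap.sub_apply, Complex.sub_im, hCapp x, (hg x).2]
  have hCnorm : ‖C‖ ≤ ‖g‖ := by
    rw [hCdef, norm_smul, Complex.norm_real, Real.norm_eq_abs, abs_of_nonneg hc]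
    have : ‖(1 : C(X,ℂ))‖ ≤ 1 :=
      (ContinuousMap.norm_le _ zero_le_one).mpr (fun x => by simp)
    nlinarith
  have hPCle : ∀ x, (P C x).re ≤ ‖g‖ := by
    intro x
    have h1 : (P C x).re ≤ ‖P C x‖ := re_le_norm _
    have h2 : ‖P C x‖ ≤ ‖P C‖ := (P C).norm_coe_le_norm x
    have h3 : ‖P C‖ ≤ ‖P‖ * ‖C‖ := P.le_opNorm C
    nlinarith [norm_nonneg (P C), norm_nonneg C, norm_nonneg P]
  have hPgle : ∀ x, (P g x).re ≤ ‖g‖ := by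
    intro x
    have := Pmono g C (fun y => (hg y).2) (fun y => (hCpos y).2)
      (fun y => by rw [hCapp y]; simpa using hgle y) x
    linarith [hPCle x]
  have hCPg : ∀ x, 0 ≤ ((C - P g) x).re ∧ ((C - P g) x).im = 0 := by
    intro x
    constructor
    · simp only [ContinuousMap.sub_apply, Complex.sub_re, hCapp x, Complex.ofReal_re]
      linarith [hPgle x]
    · simp [ContinuousMap.sub_apply, Complex.sub_im, hCapp x, (hPpos g hg x).2]
  have b1 : V lam (C - g) ≤ V lam (P (C - g)) := by
    have := part1 (C-g) hCg; rwa [hinv] at this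
  have b2 : V lam (P (C-g)) ≤ V lam (C - P g) := by
    apply mono _ _ (hPpos (C-g) hCg) hCPg
    intro x
    rw [map_sub]
    simp only [ContinuousMap.sub_apply, Complex.sub_re, hCapp x, Complex.ofReal_re]
    linarith [hPCle x]
  have d1 : V lam (P g) + V lam (C - P g) ≤ V lam C := by
    have := superadd (P g) (C - P g) (hPpos g hg) hCPg
    rwa [show P g + (C - P g) = C from by abel] at this
  have e1 : V lam C ≤ V lam g + V lam (C - g) := by
    have := subadd g (C - g) hg hCg
    rwa [show g + (C - g) = C from by abel] at this
  exact le_antisymm (by linarith) a1
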